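/- (Vertex splitting preserves d-collapsibility; key step of the proof of Lemma 3.4(ii).) Let K be a simplicial complex on a finite vertex set V, let v ∈ V, let v_1, v_2 ∉ V be two new vertices, and let K^{v→v_1,v_2} be the complex obtained from K by splitting v into v_1 and v_2. If K is d-collapsible for some d ≥ 1, then K^{v→v_1,v_2} is d-collapsible. -/
import Mathlib


open scoped BigOperators

/-- A (finite abstract) simplicial complex: a family of finite subsets of the vertex
type closed under taking subsets. -/
def IsComplex {V : Type*} [DecidableEq V] (K : Finset (Finset V)) : Prop :=
  ∀ A ∈ K, ∀ B ⊆ A, B ∈ K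

/-- `K'` arises from `K` by an elementary `d`-collapse: there are faces `L, M ∈ K`
with `|L| ≤ d` (i.e. `dim L ≤ d - 1`) such that `M` is the unique inclusion-wise
maximal face of `K` containing `L` (equivalently, every face containing `L` is
contained in `M`), and `K'` is obtained from `K` by removing all faces containing `L`. -/
def ElemCollapse {V : Type*} [DecidableEq V] (d : ℕ) (K K' : Finset (Finset V)) : Prop :=
  ∃ L M, L ∈ K ∧ M ∈ K ∧ L.card ≤ d ∧ (∀ A ∈ K, L ⊆ A → A ⊆ M) ∧
    K' = K.filter fun A => ¬ L ⊆ A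

/-- `K` is `d`-collapsible: there is a sequence of elementary `d`-collapses from `K`
to the empty complex. -/
def Collapsible {V : Type*} [DecidableEq V] (d : ℕ) (K : Finset (Finset V)) : Prop :=
  Relation.ReflTransGen (ElemCollapse d) K ∅

/-- The split complex `K^{v → v₁, v₂}`, on the vertex set `{u : V // u ≠ v} ⊕ Fin 2`
(the vertices other than `v`, together with the two new copies `v₁, v₂` of `v`): its
faces are exactly the sets whose image, under the map identifying both `v₁` and `v₂`
with `v`, is a face of `K`. -/
def splitComplex {V : Type*} [Fintype V] [DecidableEq V] (K : Finset (Finset V)) (v : V) :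
    Finset (Finset ({u : V // u ≠ v} ⊕ Fin 2)) :=
  Finset.univ.filter fun B : Finset ({u : V // u ≠ v} ⊕ Fin 2) =>
    B.image (Sum.elim Subtype.val fun _ => v) ∈ K


section SplitAux

variable {V : Type} [Fintype V] [DecidableEq V] {v : V}

/-- The identification map from the split vertex set back to `V`. -/
private def sf (v : V) : ({u : V // u ≠ v} ⊕ Fin 2) → V := Sum.elim Subtype.val fun _ => v

/-- Projection of a face of the split complex to a face of `K`. -/
private def sπ (v : V) (B : Finset ({u : V // u ≠ v} ⊕ Fin 2)) : Finset V := B.image (sf v)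

/-- Full preimage of a face. -/
private def slift (v : V) (A : Finset V) : Finset ({u : V // u ≠ v} ⊕ Fin 2) :=
  Finset.univ.filter fun w => sf v w ∈ A

@[simp] private lemma sf_inl (u : {u : V // u ≠ v}) : sf v (Sum.inl u) = u.val := rfl
@[simp] private lemma sf_inr (i : Fin 2) : sf v (Sum.inr i) = v := rfl

private lemma mem_slift {A : Finset V} {w} : w ∈ slift v A ↔ sf v w ∈ A := by
  simp [slift]

private lemma subset_slift {A : Finset V} {B} : B ⊆ slift v A ↔ sπ v B ⊆ A := by
  constructor
  · intro h u hu
    obtain ⟨w, hw, rfl⟩ := Finset.mem_image.mp hu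
    exact mem_slift.mp (h hw)
  · intro h w hw
    exact mem_slift.mpr (h (Finset.mem_image.mpr ⟨w, hw, rfl⟩))

private lemma slift_subset {A : Finset V} (hv : v ∉ A) {B} :
    slift v A ⊆ B ↔ A ⊆ sπ v B := by
  constructor
  · intro h u hu
    have hne : u ≠ v := fun e => hv (e ▸ hu)
    have : (Sum.inl ⟨u, hne⟩ : {u : V // u ≠ v} ⊕ Fin 2) ∈ slift v A := mem_slift.mpr hu
    exact Finset.mem_image.mpr ⟨_, h this, rfl⟩
  · intro h w hw
    rw [mem_slift] at hw
    match w with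
    | Sum.inr i => exact absurd hw hv
    | Sum.inl u =>
      obtain ⟨w', hw', he⟩ := Finset.mem_image.mp (h hw)
      match w' with
      | Sum.inr i => exact absurd he.symm u.2
      | Sum.inl u' =>
        have : u' = u := Subtype.ext he
        exact this ▸ hw'

private lemma sπ_slift (A : Finset V) : sπ v (slift v A) = A := by
  ext u
  simp only [sπ, Finset.mem_image, mem_slift]
  constructor
  · rintro ⟨w, hw, rfl⟩; exact hw
  · intro hu
    by_cases hne : u = v
    · exact ⟨Sum.inr 0, by simp [hne ▸ hu], hne.symm⟩
    · exact ⟨Sum.inl ⟨u, hne⟩, by simpa using hu, rfl⟩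

private lemma card_slift {A : Finset V} (hv : v ∉ A) : (slift v A).card = A.card := by
  have h1 : Set.InjOn (sf v) (slift v A) := by
    intro w1 hw1 w2 hw2 he
    simp only [Finset.coe_filter, Set.mem_setOf_eq, slift, Finset.mem_coe, Finset.mem_filter] at hw1 hw2
    match w1, w2 with
    | Sum.inl a, Sum.inl b => exact congrArg Sum.inl (Subtype.ext he)
    | Sum.inl a, Sum.inr i => exact absurd he a.2
    | Sum.inr i, _ => exact absurd hw1.2 hv
  calc (slift v A).card = ((slift v A).image (sf v)).card := (Finset.card_image_of_injOn h1).symm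
    _ = A.card := by rw [show (slift v A).image (sf v) = sπ v (slift v A) from rfl, sπ_slift]

private lemma v_mem_sπ {B : Finset ({u : V // u ≠ v} ⊕ Fin 2)} :
    v ∈ sπ v B ↔ ((Sum.inr 0 : {u : V // u ≠ v} ⊕ Fin 2) ∈ B ∨ (Sum.inr 1 : {u : V // u ≠ v} ⊕ Fin 2) ∈ B) := by
  constructor
  · intro h
    obtain ⟨w, hw, he⟩ := Finset.mem_image.mp h
    match w with
    | Sum.inl u => exact absurd he u.2
    | Sum.inr 0 => exact Or.inl hw
    | Sum.inr 1 => exact Or.inr hw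
  · rintro (h | h) <;> exact Finset.mem_image.mpr ⟨_, h, rfl⟩

private lemma mem_split {K : Finset (Finset V)} {B} :
    B ∈ splitComplex K v ↔ sπ v B ∈ K := by
  simp only [splitComplex, Finset.mem_filter, Finset.mem_univ, true_and]
  exact Iff.rfl

end SplitAux

section SplitMain

variable {V : Type} [Fintype V] [DecidableEq V] {v : V}

private lemma split_elem {d : ℕ} {K K' : Finset (Finset V)} (h : ElemCollapse d K K') :
    Relation.ReflTransGen (ElemCollapse d) (splitComplex K v) (splitComplex K' v) := by
  obtain ⟨L, M, hL, hM, hcard, hmax, rfl⟩ := h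
  by_cases hv : v ∈ L
  · -- two collapses: first remove faces containing L₁, then faces containing L₂
    have hv0 : v ∉ L.erase v := Finset.notMem_erase _ _
    have hLi : insert v (L.erase v) = L := Finset.insert_erase hv
    have hvM : v ∈ M := hmax _ hL (le_refl _) hv
    set Λ : Finset ({u : V // u ≠ v} ⊕ Fin 2) := slift v (L.erase v) with hΛ
    set L₁ : Finset ({u : V // u ≠ v} ⊕ Fin 2) := insert (Sum.inr 0) Λ with hL₁
    set L₂ : Finset ({u : V // u ≠ v} ⊕ Fin 2) := insert (Sum.inr 1) Λ with hL₂
    have hΛsub : ∀ B, Λ ⊆ B ↔ L.erase v ⊆ sπ v B := fun _ => slift_subset hv0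
    have hΛ0 : (Sum.inr 0 : {u : V // u ≠ v} ⊕ Fin 2) ∉ Λ := by
      rw [hΛ, mem_slift]; simpa using hv0
    have hΛ1 : (Sum.inr 1 : {u : V // u ≠ v} ⊕ Fin 2) ∉ Λ := by
      rw [hΛ, mem_slift]; simpa using hv0
    have hπΛ : sπ v Λ = L.erase v := sπ_slift _
    have hπ1 : sπ v L₁ = L := by
      rw [hL₁, show sπ v (insert (Sum.inr 0) Λ) = insert (sf v (Sum.inr 0)) (sπ v Λ) from
        Finset.image_insert _ _ _, sf_inr, hπΛ, hLi]
    have hπ2 : sπ v L₂ = L := by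
      rw [hL₂, show sπ v (insert (Sum.inr 1) Λ) = insert (sf v (Sum.inr 1)) (sπ v Λ) from
        Finset.image_insert _ _ _, sf_inr, hπΛ, hLi]
    have hc1 : L₁.card ≤ d := by
      rw [hL₁, Finset.card_insert_of_notMem hΛ0, hΛ, card_slift hv0]
      calc (L.erase v).card + 1 = L.card := Finset.card_erase_add_one hv
        _ ≤ d := hcard
    have hc2 : L₂.card ≤ d := by
      rw [hL₂, Finset.card_insert_of_notMem hΛ1, hΛ, card_slift hv0]
      calc (L.erase v).card + 1 = L.card := Finset.card_erase_add_one hv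
        _ ≤ d := hcard
    -- key logical equivalence
    have key : ∀ B : Finset ({u : V // u ≠ v} ⊕ Fin 2),
        L ⊆ sπ v B ↔ (L₁ ⊆ B ∨ L₂ ⊆ B) := by
      intro B
      rw [← hLi, Finset.insert_subset_iff, hL₁, hL₂, Finset.insert_subset_iff,
        Finset.insert_subset_iff, hΛsub, v_mem_sπ]
      tauto
    set K₁ : Finset (Finset ({u : V // u ≠ v} ⊕ Fin 2)) :=
      (splitComplex K v).filter (fun A => ¬ L₁ ⊆ A) with hK₁
    have step1 : ElemCollapse d (splitComplex K v) K₁ := by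
      refine ⟨L₁, slift v M, ?_, ?_, hc1, ?_, hK₁⟩
      · rw [mem_split, hπ1]; exact hL
      · rw [mem_split, sπ_slift]; exact hM
      · intro A hA hLA
        rw [subset_slift]
        refine hmax _ (mem_split.mp hA) ?_
        rw [key A]; exact Or.inl hLA
    have step2 : ElemCollapse d K₁ ((splitComplex K v).filter
        (fun A => ¬ L₁ ⊆ A ∧ ¬ L₂ ⊆ A)) := by
      refine ⟨L₂, (slift v M).erase (Sum.inr 0), ?_, ?_, hc2, ?_, ?_⟩
      · rw [hK₁, Finset.mem_filter]
        refine ⟨by rw [mem_split, hπ2]; exact hL, ?_⟩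
        intro hsub
        have : (Sum.inr 0 : {u : V // u ≠ v} ⊕ Fin 2) ∈ L₂ := hsub (by rw [hL₁]; exact Finset.mem_insert_self _ _)
        rw [hL₂, Finset.mem_insert] at this
        rcases this with h | h
        · simp at h
        · exact hΛ0 h
      · rw [hK₁, Finset.mem_filter]
        constructor
        · rw [mem_split]
          have : sπ v ((slift v M).erase (Sum.inr 0)) = M := by
            apply Finset.Subset.antisymm
            · intro u hu
              obtain ⟨w, hw, he⟩ := Finset.mem_image.mp hu
              have : w ∈ slift v M := Finset.mem_of_mem_erase hw
              rw [mem_slift] at this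
              exact he ▸ this
            · intro u hu
              by_cases hne : u = v
              · subst hne
                refine Finset.mem_image.mpr ⟨Sum.inr 1, ?_, rfl⟩
                refine Finset.mem_erase.mpr ⟨by simp, ?_⟩
                rw [mem_slift]; simpa using hu
              · refine Finset.mem_image.mpr ⟨Sum.inl ⟨u, hne⟩, ?_, rfl⟩
                refine Finset.mem_erase.mpr ⟨by simp, ?_⟩
                rw [mem_slift]; simpa using hu
          rw [this]; exact hM
        · intro hsub
          have : (Sum.inr 0 : {u : V // u ≠ v} ⊕ Fin 2) ∈ (slift v M).erase (Sum.inr 0) :=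
            hsub (by rw [hL₁]; exact Finset.mem_insert_self _ _)
          exact (Finset.notMem_erase _ _) this
      · intro A hA hLA
        rw [hK₁, Finset.mem_filter] at hA
        obtain ⟨hA, hnL₁⟩ := hA
        have h0 : (Sum.inr 0 : {u : V // u ≠ v} ⊕ Fin 2) ∉ A := by
          intro h0
          apply hnL₁
          rw [hL₁, Finset.insert_subset_iff]
          refine ⟨h0, ?_⟩
          exact (Finset.insert_subset_iff.mp (hL₂ ▸ hLA)).2
        intro w hw
        refine Finset.mem_erase.mpr ⟨fun he => h0 (he ▸ hw), ?_⟩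
        have hsub : A ⊆ slift v M := by
          rw [subset_slift]
          refine hmax _ (mem_split.mp hA) ?_
          rw [key A]; exact Or.inr hLA
        exact hsub hw
      · rw [hK₁, Finset.filter_filter]
    have hfinal : (splitComplex K v).filter (fun A => ¬ L₁ ⊆ A ∧ ¬ L₂ ⊆ A)
        = splitComplex (K.filter fun A => ¬ L ⊆ A) v := by
      ext B
      rw [Finset.mem_filter, mem_split, mem_split, Finset.mem_filter, key B]
      tauto
    exact Relation.ReflTransGen.head step1
      (Relation.ReflTransGen.single (hfinal ▸ step2))
  · -- single collapse with slift v L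
    refine Relation.ReflTransGen.single ⟨slift v L, slift v M, ?_, ?_, ?_, ?_, ?_⟩
    · rw [mem_split, sπ_slift]; exact hL
    · rw [mem_split, sπ_slift]; exact hM
    · rw [card_slift hv]; exact hcard
    · intro A hA hLA
      rw [subset_slift]
      exact hmax _ (mem_split.mp hA) ((slift_subset hv).mp hLA)
    · ext B
      rw [mem_split, Finset.mem_filter, Finset.mem_filter, mem_split, slift_subset hv]

end SplitMain

/-- **Vertex splitting preserves `d`-collapsibility** (key step in the proof of
Lemma 3.4(ii)). -/
theorem splitComplex_collapsible
    {V : Type} [Fintype V] [DecidableEq V] (K : Finset (Finset V)) (hK : IsComplex K)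
    (v : V) (d : ℕ) (hd : 1 ≤ d) (hcoll : Collapsible d K) :
    Collapsible d (splitComplex K v) := by
  clear hK
  unfold Collapsible at hcoll ⊢
  induction hcoll using Relation.ReflTransGen.head_induction_on with
  | refl =>
      have h0 : splitComplex (∅ : Finset (Finset V)) v = ∅ := by
        simp [splitComplex]
      rw [h0]
  | head h _ ih => exact (split_elem h).trans ih
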